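/- Mertens' second theorem: there exists a constant c such that ∑_{p ≤ x} 1/p = ln(ln x) + c + O(1/ln x) as x → ∞. -/

import Mathlib

open Finset Real

namespace Mertens2Aux

/-- The primes up to `n`. -/
def P (n : ℕ) : Finset ℕ := (Finset.Icc 1 n).filter Nat.Prime

lemma P_eq_range (n : ℕ) : P n = (Finset.range (n + 1)).filter Nat.Prime := by
  ext p
  simp only [P, mem_filter, mem_Icc, mem_range, Nat.lt_succ_iff, and_congr_left_iff]
  intro hp
  exact ⟨fun h => h.2, fun h => ⟨hp.one_lt.le, h⟩⟩

lemma theta_bound (n : ℕ) : ∑ p ∈ P n, Real.log p ≤ n * Real.log 4 := by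
  have h1 : ∑ p ∈ P n, Real.log p = Real.log ((primorial n : ℕ) : ℝ) := by
    rw [primorial, ← P_eq_range]
    push_cast
    rw [Real.log_prod]
    intro p hp
    have := (mem_filter.mp hp).2.pos
    positivity
  rw [h1]
  calc Real.log ((primorial n : ℕ) : ℝ) ≤ Real.log ((4 ^ n : ℕ) : ℝ) := by
        apply Real.log_le_log (by exact_mod_cast (primorial_pos n))
        exact_mod_cast primorial_le_4_pow n
    _ = n * Real.log 4 := by push_cast; rw [Real.log_pow]

end Mertens2Aux

namespace Mertens2Aux

noncomputable def K : ℝ := 4 * ∑' m : ℕ, ((m : ℝ) ^ (3/2 : ℝ))⁻¹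

lemma g_summable : Summable (fun m : ℕ => ((m : ℝ) ^ (3/2 : ℝ))⁻¹) :=
  Real.summable_nat_rpow_inv.mpr (by norm_num)

lemma K_nonneg : 0 ≤ K := by
  have : 0 ≤ ∑' m : ℕ, ((m : ℝ) ^ (3/2 : ℝ))⁻¹ :=
    tsum_nonneg fun m => by positivity
  unfold K; linarith

lemma log_le_two_sqrt {x : ℝ} (hx : 0 < x) : Real.log x ≤ 2 * Real.sqrt x := by
  have h1 : Real.log (Real.sqrt x) ≤ Real.sqrt x - 1 :=
    Real.log_le_sub_one_of_pos (Real.sqrt_pos.mpr hx)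
  have h2 : Real.log (Real.sqrt x) = Real.log x / 2 := Real.log_sqrt hx.le
  linarith

lemma term_bound {p : ℕ} (hp : p.Prime) :
    Real.log p / (p * (p - 1)) ≤ 4 * ((p : ℝ) ^ (3/2 : ℝ))⁻¹ := by
  have hp2 : (2 : ℝ) ≤ p := by exact_mod_cast hp.two_le
  have hp0 : (0 : ℝ) < p := by linarith
  have hsq : (0 : ℝ) < Real.sqrt p := Real.sqrt_pos.mpr hp0
  have hrpow : (p : ℝ) ^ (3/2 : ℝ) = p * Real.sqrt p := by
    rw [Real.sqrt_eq_rpow, show (3/2 : ℝ) = 1 + 1/2 by norm_num, Real.rpow_add hp0,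
      Real.rpow_one]
  rw [hrpow, div_le_iff₀ (by nlinarith), mul_comm (4 : ℝ), inv_mul_eq_div,
    div_mul_eq_mul_div, le_div_iff₀ (by positivity)]
  have hlog : Real.log p ≤ 2 * Real.sqrt p := log_le_two_sqrt hp0
  have hsq2 : Real.sqrt p * Real.sqrt p = p := Real.mul_self_sqrt hp0.le
  have key : Real.log p * ((p : ℝ) * Real.sqrt p) ≤ 2 * (p : ℝ) * p := by
    calc Real.log p * ((p : ℝ) * Real.sqrt p)
        ≤ (2 * Real.sqrt p) * ((p : ℝ) * Real.sqrt p) :=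
          mul_le_mul_of_nonneg_right hlog (by positivity)
      _ = 2 * (p : ℝ) * (Real.sqrt p * Real.sqrt p) := by ring
      _ = 2 * (p : ℝ) * p := by rw [hsq2]
  nlinarith [key, mul_le_mul_of_nonneg_left hp2 hp0.le]

lemma sum_term_le (n : ℕ) : ∑ p ∈ P n, Real.log p / (p * (p - 1)) ≤ K := by
  calc ∑ p ∈ P n, Real.log p / (p * (p - 1))
      ≤ ∑ p ∈ P n, 4 * ((p : ℝ) ^ (3/2 : ℝ))⁻¹ :=
        Finset.sum_le_sum fun p hp => term_bound (mem_filter.mp hp).2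
    _ = 4 * ∑ p ∈ P n, ((p : ℝ) ^ (3/2 : ℝ))⁻¹ := by rw [Finset.mul_sum]
    _ ≤ K := by
        unfold K
        have := Summable.sum_le_tsum (P n) (fun m _ => by positivity) g_summable
        linarith

end Mertens2Aux

namespace Mertens2Aux

lemma pow_le_fact_exp : ∀ n : ℕ, (n : ℝ) ^ n ≤ (n.factorial : ℝ) * Real.exp 1 ^ n := by
  intro n
  induction n with
  | zero => simp
  | succ n ih =>
    rcases Nat.eq_zero_or_pos n with rfl | hn
    · simpa using Real.one_le_exp (by norm_num)
    have hn0 : (0 : ℝ) < n := by exact_mod_cast hn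
    have key : ((n : ℝ) + 1) ^ n ≤ (n : ℝ) ^ n * Real.exp 1 := by
      have h1 : ((n : ℝ) + 1) = n * (1 + 1 / n) := by field_simp
      have h2 : (1 + 1 / (n : ℝ)) ≤ Real.exp (1 / n) := by
        have := Real.add_one_le_exp (1 / (n : ℝ)); linarith
      have h3 : (1 + 1 / (n : ℝ)) ^ n ≤ Real.exp (1 / n) ^ n :=
        pow_le_pow_left₀ (by positivity) h2 n
      have h4 : Real.exp (1 / (n : ℝ)) ^ n = Real.exp 1 := by
        rw [← Real.exp_nat_mul]
        congr 1
        field_simp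
      calc ((n : ℝ) + 1) ^ n = (n : ℝ) ^ n * (1 + 1 / n) ^ n := by rw [h1, mul_pow]
        _ ≤ (n : ℝ) ^ n * Real.exp (1 / n) ^ n :=
            mul_le_mul_of_nonneg_left h3 (by positivity)
        _ = (n : ℝ) ^ n * Real.exp 1 := by rw [h4]
    have hfact : (0 : ℝ) < n.factorial := by exact_mod_cast n.factorial_pos
    calc ((n + 1 : ℕ) : ℝ) ^ (n + 1) = ((n : ℝ) + 1) * ((n : ℝ) + 1) ^ n := by
          push_cast; ring
      _ ≤ ((n : ℝ) + 1) * ((n : ℝ) ^ n * Real.exp 1) :=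
          mul_le_mul_of_nonneg_left key (by positivity)
      _ ≤ ((n : ℝ) + 1) * (((n.factorial : ℝ) * Real.exp 1 ^ n) * Real.exp 1) := by
          apply mul_le_mul_of_nonneg_left _ (by positivity)
          exact mul_le_mul_of_nonneg_right ih (Real.exp_pos 1).le
      _ = (((n + 1).factorial : ℝ)) * Real.exp 1 ^ (n + 1) := by
          push_cast [Nat.factorial_succ]; ring

lemma log_factorial_le (n : ℕ) : Real.log (n.factorial) ≤ n * Real.log n := by
  rcases Nat.eq_zero_or_pos n with rfl | hn
  · simp
  calc Real.log (n.factorial) ≤ Real.log ((n : ℝ) ^ n) := by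
        apply Real.log_le_log (by exact_mod_cast n.factorial_pos)
        exact_mod_cast Nat.factorial_le_pow n
    _ = n * Real.log n := Real.log_pow n n

lemma le_log_factorial (n : ℕ) (hn : 1 ≤ n) :
    (n : ℝ) * Real.log n - n ≤ Real.log (n.factorial) := by
  have h1 : (n : ℝ) ^ n ≤ (n.factorial : ℝ) * Real.exp 1 ^ n := pow_le_fact_exp n
  have hn0 : (0 : ℝ) < n := by exact_mod_cast hn
  have h2 : Real.log ((n : ℝ) ^ n) ≤ Real.log ((n.factorial : ℝ) * Real.exp 1 ^ n) :=
    Real.log_le_log (by positivity) h1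
  rw [Real.log_pow, Real.log_mul (by exact_mod_cast n.factorial_pos.ne') (by positivity),
    Real.log_pow, Real.log_exp] at h2
  linarith

end Mertens2Aux

namespace Mertens2Aux

lemma P_eq_support (n : ℕ) (hn : 1 ≤ n) : P n = (n.factorial.factorization).support := by
  ext p
  rw [Nat.support_factorization, Nat.mem_primeFactors]
  simp only [P, mem_filter, mem_Icc]
  constructor
  · rintro ⟨⟨h1, h2⟩, hp⟩
    exact ⟨hp, (Nat.Prime.dvd_factorial hp).mpr h2, n.factorial_ne_zero⟩
  · rintro ⟨hp, hdvd, -⟩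
    exact ⟨⟨hp.one_lt.le, (Nat.Prime.dvd_factorial hp).mp hdvd⟩, hp⟩

lemma log_factorial_eq (n : ℕ) (hn : 1 ≤ n) :
    Real.log (n.factorial) =
      ∑ p ∈ P n, (n.factorial.factorization p : ℝ) * Real.log p := by
  have h1 : ((n.factorial : ℕ) : ℝ) =
      ∏ p ∈ P n, (p : ℝ) ^ (n.factorial.factorization p) := by
    rw [P_eq_support n hn]
    conv_lhs => rw [← Nat.factorization_prod_pow_eq_self n.factorial_ne_zero]
    rw [Finsupp.prod]
    push_cast
    rfl
  rw [h1, Real.log_prod]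
  · exact Finset.sum_congr rfl fun p hp => by rw [Real.log_pow]
  · intro p hp
    have := (mem_filter.mp hp).2.pos
    positivity

lemma fact_lower {n p : ℕ} (hn : 1 ≤ n) (hp : p.Prime) (hpn : p ≤ n) :
    (n : ℝ) / p - 1 ≤ (n.factorial.factorization p : ℝ) := by
  have : Fact p.Prime := ⟨hp⟩
  have hb : Nat.log p n < Nat.log p n + 1 := Nat.lt_succ_self _
  have hval : n.factorial.factorization p = ∑ i ∈ Finset.Ico 1 (Nat.log p n + 1), n / p ^ i := by
    rw [Nat.factorization_def _ hp, padicValNat_factorial hb]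
  have hlogpos : 0 < Nat.log p n := Nat.log_pos hp.one_lt hpn
  have hmem : 1 ∈ Finset.Ico 1 (Nat.log p n + 1) := Finset.mem_Ico.mpr ⟨le_refl 1, by omega⟩
  have h1 : n / p ≤ n.factorial.factorization p := by
    rw [hval]
    calc n / p = n / p ^ 1 := by rw [pow_one]
      _ ≤ _ := Finset.single_le_sum (f := fun i => n / p ^ i) (fun i _ => Nat.zero_le _) hmem
  have h2 : (n : ℝ) / p - 1 ≤ ((n / p : ℕ) : ℝ) := by
    have hlt := Nat.lt_mul_div_succ n hp.pos
    have hcast : (n : ℝ) < p * ((n / p : ℕ) + 1 : ℕ) := by exact_mod_cast hlt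
    have hppos : (0 : ℝ) < p := by exact_mod_cast hp.pos
    rw [sub_le_iff_le_add, div_le_iff₀ hppos]
    push_cast at hcast ⊢
    linarith
  calc (n : ℝ) / p - 1 ≤ ((n / p : ℕ) : ℝ) := h2
    _ ≤ _ := by exact_mod_cast h1

lemma fact_upper {n p : ℕ} (hp : p.Prime) :
    (n.factorial.factorization p : ℝ) ≤ (n : ℝ) / (p - 1) := by
  have : Fact p.Prime := ⟨hp⟩
  have hb : Nat.log p n < Nat.log p n + 1 := Nat.lt_succ_self _
  have hval : n.factorial.factorization p = ∑ i ∈ Finset.Ico 1 (Nat.log p n + 1), n / p ^ i := by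
    rw [Nat.factorization_def _ hp, padicValNat_factorial hb]
  have hp2 : (2 : ℝ) ≤ p := by exact_mod_cast hp.two_le
  have hppos : (0 : ℝ) < p := by linarith
  set b := Nat.log p n + 1
  have step1 : (n.factorial.factorization p : ℝ) ≤ ∑ i ∈ Finset.Ico 1 b, (n : ℝ) / p ^ i := by
    rw [hval]
    push_cast
    apply Finset.sum_le_sum
    intro i _
    rw [div_eq_mul_inv, ← Nat.cast_pow]
    exact_mod_cast Nat.cast_div_le.trans (by rw [div_eq_mul_inv])
  have hr0 : (0 : ℝ) ≤ (p : ℝ)⁻¹ := by positivity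
  have hr1 : (p : ℝ)⁻¹ < 1 := by
    rw [inv_lt_one_iff₀]; right; linarith
  have step2 : ∑ i ∈ Finset.Ico 1 b, (n : ℝ) / p ^ i
      = (n : ℝ) * ∑ i ∈ Finset.Ico 1 b, ((p : ℝ)⁻¹) ^ i := by
    rw [Finset.mul_sum]
    exact Finset.sum_congr rfl fun i _ => by
      rw [inv_pow, div_eq_mul_inv]
  have step3 : ∑ i ∈ Finset.Ico 1 b, ((p : ℝ)⁻¹) ^ i ≤ (p - 1 : ℝ)⁻¹ := by
    set r : ℝ := (p : ℝ)⁻¹ with hr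
    have hgeom : ∀ m : ℕ, ∑ i ∈ Finset.range m, r ^ i ≤ (1 - r)⁻¹ := by
      intro m
      rw [geom_sum_eq hr1.ne]
      have hpos : (0 : ℝ) < 1 - r := by linarith
      have : (r ^ m - 1) / (r - 1) = (1 - r ^ m) * (1 - r)⁻¹ := by
        rw [← neg_sub (1 : ℝ) (r ^ m), ← neg_sub (1 : ℝ) r, neg_div_neg_eq, div_eq_mul_inv]
      rw [this]
      have hrm : (0 : ℝ) ≤ r ^ m := by positivity
      nlinarith [inv_pos.mpr hpos]
    have hsplit : ∑ i ∈ Finset.Ico 1 b, r ^ i = r * ∑ i ∈ Finset.range (b - 1), r ^ i := by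
      rw [Finset.sum_Ico_eq_sum_range, Finset.mul_sum]
      exact Finset.sum_congr rfl fun i _ => by rw [pow_add, pow_one]
    have hfinal : r * (1 - r)⁻¹ = (p - 1 : ℝ)⁻¹ := by
      have hp1 : (p : ℝ) - 1 ≠ 0 := by linarith
      have hpne : (p : ℝ) ≠ 0 := by linarith
      have h1 : (1 : ℝ) - (p : ℝ)⁻¹ = ((p : ℝ) - 1) * (p : ℝ)⁻¹ := by
        rw [sub_mul, mul_inv_cancel₀ hpne, one_mul]
      rw [h1, mul_inv, inv_inv]
      calc (p : ℝ)⁻¹ * (((p : ℝ) - 1)⁻¹ * p) = ((p : ℝ) * (p : ℝ)⁻¹) * ((p : ℝ) - 1)⁻¹ := by ring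
        _ = ((p : ℝ) - 1)⁻¹ := by rw [mul_inv_cancel₀ hpne, one_mul]
    calc ∑ i ∈ Finset.Ico 1 b, r ^ i = r * ∑ i ∈ Finset.range (b - 1), r ^ i := hsplit
      _ ≤ r * (1 - r)⁻¹ := mul_le_mul_of_nonneg_left (hgeom _) hr0
      _ = (p - 1 : ℝ)⁻¹ := hfinal
  calc (n.factorial.factorization p : ℝ)
      ≤ (n : ℝ) * ∑ i ∈ Finset.Ico 1 b, ((p : ℝ)⁻¹) ^ i := by rw [← step2]; exact step1
    _ ≤ (n : ℝ) * (p - 1 : ℝ)⁻¹ := mul_le_mul_of_nonneg_left step3 (Nat.cast_nonneg n)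
    _ = (n : ℝ) / (p - 1) := by rw [div_eq_mul_inv]

end Mertens2Aux

namespace Mertens2Aux

noncomputable def LSum (n : ℕ) : ℝ := ∑ p ∈ P n, Real.log p / p

lemma mertens1_nat (n : ℕ) (hn : 1 ≤ n) : |LSum n - Real.log n| ≤ 1 + K + Real.log 4 := by
  have hn0 : (0 : ℝ) < n := by exact_mod_cast hn
  have hlogp_nonneg : ∀ p ∈ P n, (0 : ℝ) ≤ Real.log p := fun p hp =>
    Real.log_nonneg (by exact_mod_cast (mem_filter.mp hp).2.one_lt.le)
  have hupper : LSum n ≤ Real.log n + Real.log 4 := by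
    have h1 : (n : ℝ) * LSum n ≤ Real.log (n.factorial) + n * Real.log 4 := by
      have h2 : (n : ℝ) * LSum n = ∑ p ∈ P n, ((n : ℝ) / p) * Real.log p := by
        rw [LSum, Finset.mul_sum]
        exact Finset.sum_congr rfl fun p hp => by ring
      rw [h2, log_factorial_eq n hn]
      have h3 : ∀ p ∈ P n, ((n : ℝ) / p) * Real.log p ≤
          (n.factorial.factorization p : ℝ) * Real.log p + Real.log p := by
        intro p hp
        obtain ⟨hmem, hprime⟩ := mem_filter.mp hp
        have hpn := (Finset.mem_Icc.mp hmem).2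
        have := fact_lower hn hprime hpn
        nlinarith [hlogp_nonneg p hp]
      calc ∑ p ∈ P n, ((n : ℝ) / p) * Real.log p
          ≤ ∑ p ∈ P n, ((n.factorial.factorization p : ℝ) * Real.log p + Real.log p) :=
            Finset.sum_le_sum h3
        _ = (∑ p ∈ P n, (n.factorial.factorization p : ℝ) * Real.log p) +
              ∑ p ∈ P n, Real.log p := Finset.sum_add_distrib
        _ ≤ _ := by have := theta_bound n; linarith
    have h4 := log_factorial_le n
    have h5 : (n : ℝ) * LSum n ≤ n * Real.log n + n * Real.log 4 := by linarith
    exact le_of_mul_le_mul_left (by nlinarith) hn0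
  have hlower : Real.log n - 1 - K ≤ LSum n := by
    have h1 : Real.log (n.factorial) ≤ (n : ℝ) * LSum n + n * K := by
      rw [log_factorial_eq n hn]
      have h3 : ∀ p ∈ P n, (n.factorial.factorization p : ℝ) * Real.log p ≤
          ((n : ℝ) / p) * Real.log p + (n : ℝ) * (Real.log p / (p * (p - 1))) := by
        intro p hp
        obtain ⟨hmem, hprime⟩ := mem_filter.mp hp
        have hfu := fact_upper (n := n) hprime
        have hp2 : (2 : ℝ) ≤ p := by exact_mod_cast hprime.two_le
        have hkey : (n : ℝ) / (p - 1) * Real.log p =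
            ((n : ℝ) / p) * Real.log p + (n : ℝ) * (Real.log p / (p * (p - 1))) := by
          have hpne : (p : ℝ) ≠ 0 := by linarith
          have hp1ne : (p : ℝ) - 1 ≠ 0 := by linarith
          field_simp
          ring
        rw [← hkey]
        exact mul_le_mul_of_nonneg_right hfu (hlogp_nonneg p hp)
      calc ∑ p ∈ P n, (n.factorial.factorization p : ℝ) * Real.log p
          ≤ ∑ p ∈ P n, (((n : ℝ) / p) * Real.log p +
              (n : ℝ) * (Real.log p / (p * (p - 1)))) := Finset.sum_le_sum h3
        _ = (∑ p ∈ P n, ((n : ℝ) / p) * Real.log p) +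
              (n : ℝ) * ∑ p ∈ P n, Real.log p / (p * (p - 1)) := by
            rw [Finset.sum_add_distrib, Finset.mul_sum]
        _ ≤ (n : ℝ) * LSum n + (n : ℝ) * K := by
            have h2 : ∑ p ∈ P n, ((n : ℝ) / p) * Real.log p = (n : ℝ) * LSum n := by
              rw [LSum, Finset.mul_sum]
              exact Finset.sum_congr rfl fun p hp => by ring
            have := sum_term_le n
            have := mul_le_mul_of_nonneg_left (sum_term_le n) hn0.le
            linarith
    have h4 := le_log_factorial n hn
    have h5 : (n : ℝ) * Real.log n - n ≤ (n : ℝ) * LSum n + n * K := by linarith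
    have h6 : (n : ℝ) * (Real.log n - 1 - K) ≤ (n : ℝ) * LSum n := by ring_nf; ring_nf at h5; linarith
    exact le_of_mul_le_mul_left (by linarith) hn0
  rw [abs_le]
  have hK := K_nonneg
  have hlog4 : (0 : ℝ) ≤ Real.log 4 := Real.log_nonneg (by norm_num)
  constructor <;> [linarith; linarith]

end Mertens2Aux

namespace Mertens2Aux

noncomputable def cseq (k : ℕ) : ℝ := if k.Prime then Real.log k / k else 0

lemma csum_eq (m : ℕ) : ∑ k ∈ Finset.Icc 0 m, cseq k = LSum m := by
  rw [LSum, P, Finset.sum_filter]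
  symm
  unfold cseq
  apply Finset.sum_subset
  · intro k hk
    simp only [Finset.mem_Icc] at hk ⊢
    omega
  · intro k hk hk'
    simp only [Finset.mem_Icc, not_and, not_le] at hk hk'
    have hk0 : k = 0 := by omega
    simp [hk0]

noncomputable def M : ℝ := 1 + K + Real.log 4 + Real.log 2

lemma M_pos : 0 < M := by
  have := K_nonneg
  have h2 : (0:ℝ) ≤ Real.log 2 := Real.log_nonneg (by norm_num)
  have h4 : (0:ℝ) ≤ Real.log 4 := Real.log_nonneg (by norm_num)
  unfold M; linarith

lemma mertens1_real {x : ℝ} (hx : 1 ≤ x) :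
    |(∑ k ∈ Finset.Icc 0 ⌊x⌋₊, cseq k) - Real.log x| ≤ M := by
  set m := ⌊x⌋₊ with hm
  have hm1 : 1 ≤ m := Nat.le_floor (by exact_mod_cast hx)
  have hm0 : (0 : ℝ) < m := by exact_mod_cast hm1
  have hfl : (m : ℝ) ≤ x := Nat.floor_le (by linarith)
  have hfu : x < (m : ℝ) + 1 := Nat.lt_floor_add_one x
  have h1 := mertens1_nat m hm1
  have hlog1 : Real.log m ≤ Real.log x := Real.log_le_log hm0 hfl
  have hlog2 : Real.log x ≤ Real.log m + Real.log 2 := by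
    have h3 : Real.log x ≤ Real.log ((m : ℝ) + 1) :=
      Real.log_le_log (by linarith) hfu.le
    have h4 : Real.log ((m : ℝ) + 1) ≤ Real.log ((m : ℝ) * 2) := by
      apply Real.log_le_log (by linarith)
      have : (1 : ℝ) ≤ m := by exact_mod_cast hm1
      linarith
    rw [Real.log_mul hm0.ne' (by norm_num)] at h4
    linarith
  rw [csum_eq]
  rw [abs_le] at h1 ⊢
  unfold M
  constructor <;> linarith

end Mertens2Aux

namespace Mertens2Aux

open MeasureTheory Set

noncomputable def finv (t : ℝ) : ℝ := (Real.log t)⁻¹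
noncomputable def hfun (t : ℝ) : ℝ := t⁻¹ / (Real.log t) ^ 2
noncomputable def Lfun (x : ℝ) : ℝ := ∑ k ∈ Finset.Icc 0 ⌊x⌋₊, cseq k
noncomputable def Rfun (x : ℝ) : ℝ := Lfun x - Real.log x

lemma hfun_nonneg {t : ℝ} (ht : 0 ≤ t) : 0 ≤ hfun t := by unfold hfun; positivity

lemma f_hasDeriv {t : ℝ} (ht : 1 < t) : HasDerivAt finv (-hfun t) t := by
  have ht0 : t ≠ 0 := by linarith
  have hlog : Real.log t ≠ 0 := ne_of_gt (Real.log_pos ht)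
  have h := (Real.hasDerivAt_log ht0).inv hlog
  exact (by simpa [hfun, neg_div] using h : HasDerivAt (Real.log⁻¹) (-hfun t) t)

lemma deriv_f_eq {t : ℝ} (ht : 1 < t) : deriv finv t = -hfun t := (f_hasDeriv ht).deriv

lemma contOn_hfun {s : Set ℝ} (hs : ∀ t ∈ s, 1 < t) : ContinuousOn hfun s := by
  apply ContinuousOn.div
  · exact ContinuousOn.inv₀ continuousOn_id fun t ht => ne_of_gt (by linarith [hs t ht])
  · exact (Real.continuousOn_log.mono fun t ht => by
      simp only [Set.mem_compl_iff, Set.mem_singleton_iff]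
      exact ne_of_gt (by linarith [hs t ht])).pow 2
  · intro t ht
    exact pow_ne_zero 2 (ne_of_gt (Real.log_pos (hs t ht)))

lemma neg_finv_hasDeriv {t : ℝ} (ht : 1 < t) :
    HasDerivAt (fun y => -finv y) (hfun t) t := by
  exact (by simpa using (f_hasDeriv ht).neg : HasDerivAt (-finv) (hfun t) t)

lemma tendsto_neg_finv : Filter.Tendsto (fun y => -finv y) Filter.atTop (nhds 0) := by
  have h : Filter.Tendsto finv Filter.atTop (nhds 0) :=
    Real.tendsto_log_atTop.inv_tendsto_atTop
  simpa using h.neg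

lemma integrableOn_hfun {b : ℝ} (hb : 1 < b) : IntegrableOn hfun (Set.Ioi b) :=
  integrableOn_Ioi_deriv_of_nonneg' (fun t ht => neg_finv_hasDeriv (lt_of_lt_of_le hb ht))
    (fun t ht => hfun_nonneg (by linarith [ht.out])) tendsto_neg_finv

lemma integral_hfun {b : ℝ} (hb : 1 < b) :
    ∫ t in Set.Ioi b, hfun t = (Real.log b)⁻¹ := by
  rw [integral_Ioi_of_hasDerivAt_of_nonneg' (fun t ht => neg_finv_hasDeriv (lt_of_lt_of_le hb ht))
    (fun t ht => hfun_nonneg (by linarith [ht.out])) tendsto_neg_finv]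
  simp [finv]

lemma measurable_Lfun : Measurable Lfun := by
  have : Lfun = (fun n : ℕ => ∑ k ∈ Finset.Icc 0 n, cseq k) ∘ Nat.floor := rfl
  rw [this]
  exact measurable_from_top.comp Nat.measurable_floor

lemma measurable_Rfun : Measurable Rfun :=
  measurable_Lfun.sub Real.measurable_log

lemma abs_Rfun_le {t : ℝ} (ht : 1 ≤ t) : |Rfun t| ≤ M := mertens1_real ht

noncomputable def gfun (t : ℝ) : ℝ := deriv finv t * Rfun t

lemma integrableOn_gfun {b : ℝ} (hb : (3:ℝ)/2 ≤ b) : IntegrableOn gfun (Set.Ioi b) := by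
  have hb1 : 1 < b := by linarith
  apply Integrable.mono' ((integrableOn_hfun hb1).const_mul M)
  · exact ((measurable_deriv finv).mul measurable_Rfun).aestronglyMeasurable
  · rw [ae_restrict_iff' measurableSet_Ioi]
    filter_upwards with t ht
    have ht1 : 1 < t := lt_trans hb1 ht
    rw [gfun, deriv_f_eq ht1, norm_mul, norm_neg, Real.norm_eq_abs, Real.norm_eq_abs,
      abs_of_nonneg (hfun_nonneg (by linarith))]
    calc hfun t * |Rfun t| ≤ hfun t * M :=
          mul_le_mul_of_nonneg_left (abs_Rfun_le ht1.le) (hfun_nonneg (by linarith))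
      _ = M * hfun t := mul_comm _ _

lemma tail_bound {b : ℝ} (hb : (3:ℝ)/2 ≤ b) :
    |∫ t in Set.Ioi b, gfun t| ≤ M * (Real.log b)⁻¹ := by
  have hb1 : 1 < b := by linarith
  have h1 : |∫ t in Set.Ioi b, gfun t| ≤ ∫ t in Set.Ioi b, M * hfun t := by
    rw [← Real.norm_eq_abs]
    apply norm_integral_le_of_norm_le ((integrableOn_hfun hb1).const_mul M)
    rw [ae_restrict_iff' measurableSet_Ioi]
    filter_upwards with t ht
    have ht1 : 1 < t := lt_trans hb1 ht
    rw [gfun, deriv_f_eq ht1, norm_mul, norm_neg, Real.norm_eq_abs, Real.norm_eq_abs,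
      abs_of_nonneg (hfun_nonneg (by linarith))]
    calc hfun t * |Rfun t| ≤ hfun t * M :=
          mul_le_mul_of_nonneg_left (abs_Rfun_le ht1.le) (hfun_nonneg (by linarith))
      _ = M * hfun t := mul_comm _ _
  rw [MeasureTheory.integral_const_mul, integral_hfun hb1] at h1
  exact h1

end Mertens2Aux

namespace Mertens2Aux

open MeasureTheory Set

lemma contOn_deriv_finv {s : Set ℝ} (hs : ∀ t ∈ s, 1 < t) : ContinuousOn (deriv finv) s :=
  ((contOn_hfun hs).neg).congr fun t ht => deriv_f_eq (hs t ht)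

lemma loglog_hasDeriv {t : ℝ} (ht : 1 < t) :
    HasDerivAt (fun y => -Real.log (Real.log y)) (deriv finv t * Real.log t) t := by
  have ht0 : t ≠ 0 := by linarith
  have hlogpos : 0 < Real.log t := Real.log_pos ht
  have h1 : HasDerivAt (fun y => Real.log (Real.log y)) ((Real.log t)⁻¹ * t⁻¹) t :=
    (Real.hasDerivAt_log hlogpos.ne').comp t (Real.hasDerivAt_log ht0)
  have h2 : HasDerivAt (fun y => -Real.log (Real.log y)) (-((Real.log t)⁻¹ * t⁻¹)) t := h1.neg
  convert h2 using 1
  rw [deriv_f_eq ht, hfun]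
  field_simp

lemma integral_loglog {x : ℝ} (hx : (3:ℝ)/2 ≤ x) :
    ∫ t in Set.Ioc ((3:ℝ)/2) x, deriv finv t * Real.log t
      = Real.log (Real.log ((3:ℝ)/2)) - Real.log (Real.log x) := by
  rw [← intervalIntegral.integral_of_le hx]
  have hmem : ∀ t ∈ Set.uIcc ((3:ℝ)/2) x, 1 < t := by
    intro t ht
    rw [Set.uIcc_of_le hx] at ht
    linarith [ht.1]
  have h := intervalIntegral.integral_eq_sub_of_hasDerivAt
    (f := fun y => -Real.log (Real.log y))
    (f' := fun t => deriv finv t * Real.log t)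
    (fun t ht => loglog_hasDeriv (hmem t ht))
    (ContinuousOn.intervalIntegrable
      ((contOn_deriv_finv hmem).mul (Real.continuousOn_log.mono fun t ht =>
        ne_of_gt (by linarith [hmem t ht]))))
  rw [h]
  ring

lemma sum_eq (n : ℕ) :
    ∑ p ∈ (Finset.Icc 1 n).filter Nat.Prime, (1:ℝ)/p
      = ∑ k ∈ Finset.Ioc 1 n, finv k * cseq k := by
  have h1 : (Finset.Ioc 1 n).filter Nat.Prime = (Finset.Icc 1 n).filter Nat.Prime := by
    ext p
    simp only [Finset.mem_filter, Finset.mem_Ioc, Finset.mem_Icc]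
    constructor
    · rintro ⟨⟨h1, h2⟩, hp⟩; exact ⟨⟨h1.le, h2⟩, hp⟩
    · rintro ⟨⟨-, h2⟩, hp⟩; exact ⟨⟨hp.one_lt, h2⟩, hp⟩
  rw [← Finset.sum_filter_of_ne (s := Finset.Ioc 1 n) (p := Nat.Prime)
    (f := fun k => finv k * cseq k) (fun k _ hk => by
      by_contra hprime
      apply hk
      simp [cseq, hprime]), h1]
  apply Finset.sum_congr rfl
  intro p hp
  obtain ⟨-, hprime⟩ := Finset.mem_filter.mp hp
  have h2 : (2:ℝ) ≤ p := by exact_mod_cast hprime.two_le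
  have hlog : Real.log p ≠ 0 := ne_of_gt (Real.log_pos (by linarith))
  simp only [finv, cseq, if_pos hprime]
  field_simp

lemma Lfun_a : Lfun ((3:ℝ)/2) = 0 := by
  have hfl : ⌊(3:ℝ)/2⌋₊ = 1 := by
    rw [Nat.floor_eq_iff (by norm_num)]
    norm_num
  rw [Lfun, hfl]
  rw [show Finset.Icc 0 1 = {0, 1} from rfl]
  simp [cseq]

lemma key {x : ℝ} (hx : 2 ≤ x) :
    ∑ p ∈ (Finset.Icc 1 ⌊x⌋₊).filter Nat.Prime, (1:ℝ)/p
      = finv x * Lfun x - (Real.log (Real.log ((3:ℝ)/2)) - Real.log (Real.log x))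
        - ∫ t in Set.Ioc ((3:ℝ)/2) x, gfun t := by
  have hax : (3:ℝ)/2 ≤ x := by linarith
  have hfl : ⌊(3:ℝ)/2⌋₊ = 1 := by
    rw [Nat.floor_eq_iff (by norm_num)]
    norm_num
  have hIcc : ∀ t ∈ Set.Icc ((3:ℝ)/2) x, 1 < t := fun t ht => by linarith [ht.1]
  have hf_diff : ∀ t ∈ Set.Icc ((3:ℝ)/2) x, DifferentiableAt ℝ finv t :=
    fun t ht => (f_hasDeriv (hIcc t ht)).differentiableAt
  have hf_int : IntegrableOn (deriv finv) (Set.Icc ((3:ℝ)/2) x) :=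
    (contOn_deriv_finv hIcc).integrableOn_Icc
  have habel := sum_mul_eq_sub_sub_integral_mul cseq (by norm_num : (0:ℝ) ≤ 3/2) hax
    hf_diff hf_int
  rw [hfl] at habel
  have hL : ∀ y : ℝ, (∑ k ∈ Finset.Icc 0 ⌊y⌋₊, cseq k) = Lfun y := fun y => rfl
  rw [sum_eq]
  have hLa : (∑ k ∈ Finset.Icc 0 1, cseq k) = 0 := by
    rw [show Finset.Icc 0 1 = ({0, 1} : Finset ℕ) from rfl]
    simp [cseq]
  rw [hLa, mul_zero, sub_zero] at habel
  rw [habel]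
  have I1 : IntegrableOn (fun t => deriv finv t * Real.log t) (Set.Ioc ((3:ℝ)/2) x) :=
    (((contOn_deriv_finv hIcc).mul (Real.continuousOn_log.mono fun t ht =>
      ne_of_gt (by linarith [hIcc t ht]))).integrableOn_Icc).mono_set Set.Ioc_subset_Icc_self
  have I2 : IntegrableOn gfun (Set.Ioc ((3:ℝ)/2) x) :=
    (integrableOn_gfun le_rfl).mono_set Set.Ioc_subset_Ioi_self
  have hsplit : ∫ t in Set.Ioc ((3:ℝ)/2) x, deriv finv t * (∑ k ∈ Finset.Icc 0 ⌊t⌋₊, cseq k)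
      = (∫ t in Set.Ioc ((3:ℝ)/2) x, deriv finv t * Real.log t)
        + ∫ t in Set.Ioc ((3:ℝ)/2) x, gfun t := by
    rw [← integral_add I1 I2]
    apply integral_congr_ae
    filter_upwards with t
    simp only [gfun, Rfun, Lfun]
    ring
  rw [hsplit, integral_loglog hax, hL x]
  ring
end Mertens2Aux

namespace Mertens2Aux

open MeasureTheory Set

noncomputable def J : ℝ := ∫ t in Set.Ioi ((3:ℝ)/2), gfun t

lemma split_int {x : ℝ} (hx : 2 ≤ x) :
    ∫ t in Set.Ioc ((3:ℝ)/2) x, gfun t = J - ∫ t in Set.Ioi x, gfun t := by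
  have hax : (3:ℝ)/2 ≤ x := by linarith
  have hdisj : Disjoint (Set.Ioc ((3:ℝ)/2) x) (Set.Ioi x) := by
    rw [Set.disjoint_left]
    rintro t ⟨-, h1⟩ h2
    exact absurd h1 (not_le.mpr h2)
  have hunion : Set.Ioc ((3:ℝ)/2) x ∪ Set.Ioi x = Set.Ioi ((3:ℝ)/2) :=
    Set.Ioc_union_Ioi_eq_Ioi hax
  have I2 : IntegrableOn gfun (Set.Ioc ((3:ℝ)/2) x) :=
    (integrableOn_gfun le_rfl).mono_set Set.Ioc_subset_Ioi_self
  have I3 : IntegrableOn gfun (Set.Ioi x) := integrableOn_gfun hax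
  have := setIntegral_union hdisj measurableSet_Ioi I2 I3 (f := gfun) (μ := volume)
  rw [hunion] at this
  rw [J, this]
  ring

end Mertens2Aux

open Filter in
theorem mertens_second :
    ∃ c : ℝ,
      (fun x : ℝ =>
          (∑ p ∈ (Finset.Icc 1 ⌊x⌋₊).filter Nat.Prime, (1 : ℝ) / p)
            - Real.log (Real.log x) - c)
        =O[atTop] (fun x : ℝ => 1 / Real.log x) := by
  open Mertens2Aux MeasureTheory in
  refine ⟨1 - Real.log (Real.log ((3:ℝ)/2)) - J, ?_⟩
  rw [Asymptotics.isBigO_iff]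
  refine ⟨2 * M, ?_⟩
  filter_upwards [eventually_ge_atTop (2:ℝ)] with x hx
  have hx1 : (1:ℝ) < x := by linarith
  have hlogpos : 0 < Real.log x := Real.log_pos hx1
  have hmain : (∑ p ∈ (Finset.Icc 1 ⌊x⌋₊).filter Nat.Prime, (1 : ℝ) / p)
      - Real.log (Real.log x) - (1 - Real.log (Real.log ((3:ℝ)/2)) - J)
      = finv x * Rfun x + ∫ t in Set.Ioi x, gfun t := by
    rw [key hx, split_int hx]
    have h1 : finv x * Lfun x = 1 + finv x * Rfun x := by
      have : Lfun x = Real.log x + Rfun x := by rw [Rfun]; ring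
      rw [this, mul_add, finv, inv_mul_cancel₀ hlogpos.ne']
    rw [h1]
    ring
  rw [hmain]
  have hb1 : |finv x * Rfun x| ≤ (Real.log x)⁻¹ * M := by
    rw [abs_mul, finv, abs_of_nonneg (inv_nonneg.mpr hlogpos.le)]
    exact mul_le_mul_of_nonneg_left (abs_Rfun_le (by linarith)) (inv_nonneg.mpr hlogpos.le)
  have hb2 : |∫ t in Set.Ioi x, gfun t| ≤ M * (Real.log x)⁻¹ := tail_bound (by linarith)
  rw [Real.norm_eq_abs, Real.norm_eq_abs]
  calc |finv x * Rfun x + ∫ t in Set.Ioi x, gfun t|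
      ≤ |finv x * Rfun x| + |∫ t in Set.Ioi x, gfun t| := abs_add_le _ _
    _ ≤ (Real.log x)⁻¹ * M + M * (Real.log x)⁻¹ := add_le_add hb1 hb2
    _ = 2 * M * (Real.log x)⁻¹ := by ring
    _ = 2 * M * |1 / Real.log x| := by
        rw [abs_of_nonneg (by positivity : (0:ℝ) ≤ 1 / Real.log x), one_div]
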